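/- Let G be γ-non-extremal on n vertices with δ(G) ≥ (1/2 − ν)n (ν ≪ γ), let u ∈ V(G), H ⊆ V(G) with |H| = 3D³/γ, and W ⊆ V(G) ∖ H with |W| ≤ γn/10. Let Γ be a rooted tree with root ρ, maximum degree at most D, nonempty level L₃(Γ) and empty level L₄(Γ) (so Γ has depth exactly 3). Then G contains a copy of Γ in which ρ is mapped to u, all vertices of L₃(Γ) are mapped into H, and the images of L₁(Γ) ∪ L₂(Γ) ∪ L₃(Γ) avoid W. -/

import Mathlib

open Finset
open scoped Classical

/-- Number of neighbors of `v` inside the finite set `S`. -/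
noncomputable def degIn {V : Type*} (G : SimpleGraph V) (v : V) (S : Finset V) : ℕ :=
  (S.filter fun u => G.Adj v u).card

/-- Number of ordered adjacent pairs between `A` and `B`. -/
noncomputable def eCount {V : Type*} (G : SimpleGraph V) (A B : Finset V) : ℕ :=
  ((A ×ˢ B).filter fun p => G.Adj p.1 p.2).card

/-- `G` is `γ`-non-extremal. -/
def NonExtremal {V : Type*} [Fintype V] (G : SimpleGraph V) (γ : ℝ) : Prop :=
  ∀ A B : Finset V, A.card = Fintype.card V / 2 → B.card = Fintype.card V / 2 →
    γ * (Fintype.card V : ℝ) ^ 2 < (eCount G A B : ℝ)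


lemma eCount_eq_sum {V : Type*} (G : SimpleGraph V) (A B : Finset V) :
    eCount G A B = ∑ a ∈ A, degIn G a B := by
  classical
  unfold eCount degIn
  rw [Finset.card_filter, Finset.sum_product]
  refine Finset.sum_congr rfl fun a _ => ?_
  rw [Finset.card_filter]

lemma eCount_comm {V : Type*} (G : SimpleGraph V) (A B : Finset V) :
    eCount G A B = eCount G B A := by
  classical
  unfold eCount
  rw [Finset.card_filter, Finset.card_filter, Finset.sum_product, Finset.sum_comm]
  rw [Finset.sum_product]
  refine Finset.sum_congr rfl fun b _ => Finset.sum_congr rfl fun a _ => ?_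
  simp [SimpleGraph.adj_comm]

lemma degIn_le_card {V : Type*} (G : SimpleGraph V) (v : V) (S : Finset V) :
    degIn G v S ≤ S.card := Finset.card_le_card (Finset.filter_subset _ _)

lemma eCount_mono {V : Type*} (G : SimpleGraph V) {A B A' B' : Finset V}
    (hA : A ⊆ A') (hB : B ⊆ B') : eCount G A B ≤ eCount G A' B' := by
  classical
  exact Finset.card_le_card (Finset.filter_subset_filter _ (Finset.product_subset_product hA hB))

lemma eCount_split {V : Type*} [DecidableEq V] (G : SimpleGraph V) (A B A' B' : Finset V) :
    eCount G A B ≤ eCount G (A ∩ A') (B ∩ B') + (A \ A').card * B.card + A.card * (B \ B').card := by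
  classical
  have hsub : ((A ×ˢ B).filter fun p => G.Adj p.1 p.2) ⊆
      (((A ∩ A') ×ˢ (B ∩ B')).filter fun p => G.Adj p.1 p.2) ∪ ((A \ A') ×ˢ B) ∪ (A ×ˢ (B \ B')) := by
    intro p hp
    simp only [Finset.mem_filter, Finset.mem_product] at hp
    obtain ⟨⟨ha, hb⟩, hadj⟩ := hp
    by_cases h1 : p.1 ∈ A'
    · by_cases h2 : p.2 ∈ B'
      · simp [Finset.mem_union, Finset.mem_filter, Finset.mem_product, ha, hb, h1, h2, hadj]
      · simp [Finset.mem_union, Finset.mem_product, ha, hb, h2]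
    · simp [Finset.mem_union, Finset.mem_product, ha, hb, h1]
  calc eCount G A B ≤ _ := Finset.card_le_card hsub
    _ ≤ _ := by
        refine le_trans (Finset.card_union_le _ _) ?_
        refine add_le_add (le_trans (Finset.card_union_le _ _) (add_le_add le_rfl ?_)) ?_
        · rw [Finset.card_product]
        · rw [Finset.card_product]


section Tree
variable {Vt : Type*} {Γ : SimpleGraph Vt} {ρ : Vt}

/-- In a connected graph, every vertex at distance d+1 has a neighbor at distance d. -/
lemma parent_exists (hc : Γ.Connected) {x : Vt} (hx : Γ.dist ρ x ≠ 0) :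
    ∃ p, Γ.Adj p x ∧ Γ.dist ρ p + 1 = Γ.dist ρ x := by
  obtain ⟨w, hw⟩ := (hc ρ x).exists_walk_length_eq_dist
  have hr := w.reverse
  have hlen : w.reverse.length = Γ.dist ρ x := by rw [SimpleGraph.Walk.length_reverse, hw]
  cases hr' : w.reverse with
  | nil =>
    exfalso; rw [hr'] at hlen; simp at hlen; exact hx (by simp)
  | cons h q =>
    rename_i b
    refine ⟨b, h.symm, ?_⟩
    rw [hr'] at hlen
    simp only [SimpleGraph.Walk.length_cons] at hlen
    have h1 : Γ.dist ρ b ≤ q.length := by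
      have := SimpleGraph.dist_le q.reverse
      rwa [SimpleGraph.Walk.length_reverse] at this
    have h2 : Γ.dist ρ x ≤ Γ.dist ρ b + 1 := by
      calc Γ.dist ρ x ≤ Γ.dist ρ b + Γ.dist b x := hc.dist_triangle
        _ ≤ Γ.dist ρ b + 1 := by
            gcongr
            exact SimpleGraph.dist_le h.symm.toWalk
    omega

/-- A vertex on a shortest walk: distance bound. -/
lemma dist_add_dist_le_of_mem_support {x y : Vt} (w : Γ.Walk ρ x) (hy : y ∈ w.support) :
    Γ.dist ρ y + Γ.dist y x ≤ w.length := by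
  have hspec := w.take_spec hy
  have h1 : Γ.dist ρ y ≤ (w.takeUntil y hy).length := SimpleGraph.dist_le _
  have h2 : Γ.dist y x ≤ (w.dropUntil y hy).length := SimpleGraph.dist_le _
  have h3 : (w.takeUntil y hy).length + (w.dropUntil y hy).length = w.length := by
    have := congr_arg SimpleGraph.Walk.length hspec
    rwa [SimpleGraph.Walk.length_append] at this
  omega

/-- In a tree, adjacent vertices are at different distances from the root. -/
lemma adj_dist_ne (hT : Γ.IsTree) {x y : Vt} (hxy : Γ.Adj x y) :
    Γ.dist ρ x ≠ Γ.dist ρ y := by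
  intro heq
  have hc := hT.isConnected
  set d := Γ.dist ρ x with hd
  obtain ⟨p, hp, hplen⟩ := hc.exists_path_of_dist ρ x
  by_cases hy : y ∈ p.support
  · have := dist_add_dist_le_of_mem_support p hy
    rw [hplen] at this
    have h1 : 1 ≤ Γ.dist y x := hc.pos_dist_of_ne hxy.ne'
    omega
  · -- q := p.concat hxy is a path from ρ to y of length d+1
    have hq : (p.concat hxy).IsPath := by
      rw [← SimpleGraph.Walk.isPath_reverse_iff, SimpleGraph.Walk.reverse_concat,
        SimpleGraph.Walk.cons_isPath_iff, SimpleGraph.Walk.isPath_reverse_iff]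
      refine ⟨hp, ?_⟩
      rwa [SimpleGraph.Walk.support_reverse, List.mem_reverse]
    obtain ⟨r, hr, hrlen⟩ := hc.exists_path_of_dist ρ y
    have huniq := SimpleGraph.isAcyclic_iff_path_unique.mp hT.IsAcyclic
      (⟨p.concat hxy, hq⟩ : Γ.Path ρ y) ⟨r, hr⟩
    have hle : (p.concat hxy).length = r.length := by
      have : (⟨p.concat hxy, hq⟩ : Γ.Path ρ y).val = (⟨r, hr⟩ : Γ.Path ρ y).val := by rw [huniq]
      simpa using congr_arg SimpleGraph.Walk.length this
    rw [SimpleGraph.Walk.length_concat, hplen, hrlen, ← heq] at hle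
    omega

/-- In a tree, the lower neighbor is unique. -/
lemma parent_unique (hT : Γ.IsTree) {x p p' : Vt}
    (hp : Γ.Adj p x) (hp' : Γ.Adj p' x)
    (hdp : Γ.dist ρ p + 1 = Γ.dist ρ x) (hdp' : Γ.dist ρ p' + 1 = Γ.dist ρ x) : p = p' := by
  have hc := hT.isConnected
  obtain ⟨w, hw, hwlen⟩ := hc.exists_path_of_dist ρ p
  obtain ⟨w', hw', hwlen'⟩ := hc.exists_path_of_dist ρ p'
  have hxw : x ∉ w.support := by
    intro hmem
    have := dist_add_dist_le_of_mem_support w hmem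
    rw [hwlen] at this
    omega
  have hxw' : x ∉ w'.support := by
    intro hmem
    have := dist_add_dist_le_of_mem_support w' hmem
    rw [hwlen'] at this
    omega
  have hq : (w.concat hp).IsPath := by
    rw [← SimpleGraph.Walk.isPath_reverse_iff, SimpleGraph.Walk.reverse_concat,
      SimpleGraph.Walk.cons_isPath_iff, SimpleGraph.Walk.isPath_reverse_iff]
    exact ⟨hw, by rwa [SimpleGraph.Walk.support_reverse, List.mem_reverse]⟩
  have hq' : (w'.concat hp').IsPath := by
    rw [← SimpleGraph.Walk.isPath_reverse_iff, SimpleGraph.Walk.reverse_concat,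
      SimpleGraph.Walk.cons_isPath_iff, SimpleGraph.Walk.isPath_reverse_iff]
    exact ⟨hw', by rwa [SimpleGraph.Walk.support_reverse, List.mem_reverse]⟩
  have huniq := SimpleGraph.isAcyclic_iff_path_unique.mp hT.IsAcyclic
    (⟨w.concat hp, hq⟩ : Γ.Path ρ x) ⟨w'.concat hp', hq'⟩
  have heqw : w.concat hp = w'.concat hp' := congr_arg Subtype.val huniq
  -- p lies on the support of w'.concat hp', hence on w' or equals x
  have hpmem : p ∈ (w'.concat hp').support := by
    rw [← heqw, SimpleGraph.Walk.support_concat]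
    simp
  rw [SimpleGraph.Walk.support_concat] at hpmem
  simp only [List.concat_eq_append, List.mem_append] at hpmem
  rcases hpmem with hpmem | hpx
  · have := dist_add_dist_le_of_mem_support w' hpmem
    rw [hwlen'] at this
    have hpp' : Γ.dist p p' = 0 := by omega
    exact (hc.dist_eq_zero_iff).mp hpp'
  · exact absurd (List.mem_singleton.mp hpx) hp.ne

end Tree



section Tree
variable {Vt : Type*} [Fintype Vt] {Γ : SimpleGraph Vt} {ρ : Vt}

/-- Level-size bound: a tree of depth ≤ 3 and max degree ≤ D has at most 2D³ vertices. -/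
lemma card_le_of_depth_three (hT : Γ.IsTree) (D : ℕ) (hD : 2 ≤ D)
    (hdeg : ∀ x : Vt, degIn Γ x univ ≤ D)
    (hpar : ∀ x : Vt, Γ.dist ρ x ≠ 0 → ∃ p, Γ.Adj p x ∧ Γ.dist ρ p + 1 = Γ.dist ρ x)
    (hd3 : ∀ x : Vt, Γ.dist ρ x ≤ 3) :
    Fintype.card Vt ≤ 2 * D ^ 3 := by
  classical
  set L : ℕ → Finset Vt := fun i => univ.filter (fun x => Γ.dist ρ x = i) with hL
  have hL0 : (L 0).card = 1 := by
    have : L 0 = {ρ} := by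
      ext x
      simp only [hL, Finset.mem_filter, Finset.mem_univ, true_and, Finset.mem_singleton]
      constructor
      · intro h
        exact ((hT.isConnected.dist_eq_zero_iff).mp h).symm
      · rintro rfl
        exact SimpleGraph.dist_self
    rw [this, Finset.card_singleton]
  have hstep : ∀ i : ℕ, (L (i+1)).card ≤ D * (L i).card := by
    intro i
    -- choose a parent for each vertex in L (i+1)
    have hmaps : ∀ x ∈ L (i+1), ∃ p ∈ L i, Γ.Adj p x := by
      intro x hx
      simp only [hL, Finset.mem_filter, Finset.mem_univ, true_and] at hx
      obtain ⟨p, hadj, hdp⟩ := hpar x (by omega)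
      exact ⟨p, by simp [hL, Finset.mem_filter]; omega, hadj⟩
    set par : Vt → Vt := fun x => if h : ∃ p ∈ L i, Γ.Adj p x then h.choose else ρ with hparf
    refine Finset.card_le_mul_card_image_of_maps_to (f := par) (t := L i) ?_ D ?_
    · intro x hx
      obtain h := hmaps x hx
      simp only [hparf, dif_pos h]
      exact h.choose_spec.1
    · intro b _
      have hdb := hdeg b
      simp only [degIn] at hdb
      refine le_trans (Finset.card_le_card ?_) hdb
      intro x hx
      simp only [Finset.mem_filter] at hx
      obtain ⟨hx1, hx2⟩ := hx
      obtain h := hmaps x hx1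
      simp only [Finset.mem_filter, Finset.mem_univ, true_and]
      have hch : par x = h.choose := by simp only [hparf, dif_pos h]
      rw [hch] at hx2
      rw [← hx2]
      exact h.choose_spec.2
  have huniv : (univ : Finset Vt) ⊆ L 0 ∪ L 1 ∪ L 2 ∪ L 3 := by
    intro x _
    simp only [Finset.mem_union, hL, Finset.mem_filter, Finset.mem_univ, true_and]
    have := hd3 x
    omega
  have h1 := hstep 0
  have h2 := hstep 1
  have h3 := hstep 2
  have hcard : Fintype.card Vt ≤ (L 0).card + (L 1).card + (L 2).card + (L 3).card := by
    rw [← Finset.card_univ]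
    calc (univ : Finset Vt).card ≤ (L 0 ∪ L 1 ∪ L 2 ∪ L 3).card := Finset.card_le_card huniv
      _ ≤ (L 0 ∪ L 1 ∪ L 2).card + (L 3).card :=
          Finset.card_union_le _ _
      _ ≤ (L 0 ∪ L 1).card + (L 2).card + (L 3).card := by
          gcongr; exact Finset.card_union_le _ _
      _ ≤ (L 0).card + (L 1).card + (L 2).card + (L 3).card := by
          gcongr; exact Finset.card_union_le _ _
  have hL1 : (L 1).card ≤ D := by
    calc (L (0+1)).card ≤ D * (L 0).card := h1
      _ = D := by rw [hL0, mul_one]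
  have hL2 : (L 2).card ≤ D * D := by
    calc (L (1+1)).card ≤ D * (L 1).card := h2
      _ ≤ D * D := by gcongr
  have hL3 : (L 3).card ≤ D * (D * D) := by
    calc (L (2+1)).card ≤ D * (L 2).card := h3
      _ ≤ D * (D * D) := by gcongr
  have key : 1 + D + D * D + D * (D * D) ≤ 2 * D ^ 3 := by nlinarith
  omega
end Tree


lemma greedy_embed {V Vt : Type*} [Fintype V] [Fintype Vt] (G : SimpleGraph V)
    (Γ : SimpleGraph Vt) (ρ : Vt) (par : Vt → Vt)
    (hpar : ∀ x, x ≠ ρ → Γ.Adj (par x) x ∧ Γ.dist ρ (par x) + 1 = Γ.dist ρ x)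
    (hd3 : ∀ x, Γ.dist ρ x ≤ 3)
    (A : ℕ → Finset V) (u : V) (hu : u ∈ A 0)
    (hbig : ∀ i, i < 3 → ∀ v ∈ A i, Fintype.card Vt ≤ ((A (i+1)).filter (G.Adj v)).card) :
    ∃ f : Vt → V, Function.Injective f ∧ f ρ = u ∧ (∀ x, f x ∈ A (Γ.dist ρ x)) ∧
      (∀ x, x ≠ ρ → G.Adj (f (par x)) (f x)) := by
  classical
  -- invariant
  let Good : Finset Vt → (Vt → V) → Prop := fun P f =>
    ρ ∈ P ∧ Set.InjOn f ↑P ∧ f ρ = u ∧ (∀ x ∈ P, f x ∈ A (Γ.dist ρ x)) ∧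
      (∀ x ∈ P, x ≠ ρ → par x ∈ P ∧ G.Adj (f (par x)) (f x))
  have claim : ∀ k (P : Finset Vt) (f : Vt → V), (univ \ P).card = k → Good P f →
      ∃ g : Vt → V, Function.Injective g ∧ g ρ = u ∧ (∀ x, g x ∈ A (Γ.dist ρ x)) ∧
        (∀ x, x ≠ ρ → G.Adj (g (par x)) (g x)) := by
    intro k
    induction k with
    | zero =>
      intro P f hcard hGood
      have hP : P = univ := by
        have h0 : univ \ P = ∅ := Finset.card_eq_zero.mp hcard
        exact Finset.eq_univ_of_forall fun y => (Finset.sdiff_eq_empty_iff_subset.mp h0) (Finset.mem_univ y)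
      subst hP
      obtain ⟨-, hinj, hρ, hmem, hadj⟩ := hGood
      refine ⟨f, ?_, hρ, fun x => hmem x (Finset.mem_univ x),
        fun x hx => (hadj x (Finset.mem_univ x) hx).2⟩
      intro a b hab
      exact hinj (by simp) (by simp) hab
    | succ k ih =>
      intro P f hcard hGood
      obtain ⟨hρP, hinj, hρ, hmem, hadjP⟩ := hGood
      have hne : (univ \ P).Nonempty := Finset.card_pos.mp (by omega)
      obtain ⟨x, hxmem, hxmin⟩ := Finset.exists_min_image (univ \ P) (fun y => Γ.dist ρ y) hne
      have hxP : x ∉ P := (Finset.mem_sdiff.mp hxmem).2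
      have hxρ : x ≠ ρ := fun h => hxP (h ▸ hρP)
      obtain ⟨hadjpar, hdpar⟩ := hpar x hxρ
      have hparP : par x ∈ P := by
        by_contra hcon
        have : par x ∈ univ \ P := Finset.mem_sdiff.mpr ⟨Finset.mem_univ _, hcon⟩
        have := hxmin (par x) this
        omega
      set i := Γ.dist ρ (par x) with hi
      have hi3 : i < 3 := by have := hd3 x; omega
      have hfp : f (par x) ∈ A i := hmem (par x) hparP
      have hc := hbig i hi3 (f (par x)) hfp
      set C := (A (i+1)).filter (G.Adj (f (par x))) with hC
      have hPlt : P.card < Fintype.card Vt := by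
        have : P ⊂ univ := Finset.ssubset_univ_iff.mpr (fun h => hxP (h ▸ Finset.mem_univ x))
        simpa [Finset.card_univ] using Finset.card_lt_card this
      have himg : (P.image f).card < C.card := by
        calc (P.image f).card ≤ P.card := Finset.card_image_le
          _ < Fintype.card Vt := hPlt
          _ ≤ C.card := hc
      have hCne : (C \ P.image f).Nonempty := by
        by_contra hcon
        rw [Finset.not_nonempty_iff_eq_empty, Finset.sdiff_eq_empty_iff_subset] at hcon
        exact absurd (Finset.card_le_card hcon) (not_le.mpr himg)
      obtain ⟨v, hv⟩ := hCne
      have hvC : v ∈ C := (Finset.mem_sdiff.mp hv).1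
      have hvimg : v ∉ P.image f := (Finset.mem_sdiff.mp hv).2
      have hvA : v ∈ A (i+1) := (Finset.mem_filter.mp hvC).1
      have hvadj : G.Adj (f (par x)) v := (Finset.mem_filter.mp hvC).2
      set f' := Function.update f x v with hf'
      have hfeq : ∀ y ∈ P, f' y = f y := by
        intro y hy
        exact Function.update_of_ne (fun h => hxP (by rw [← h]; exact hy)) _ _
      refine ih (insert x P) f' ?_ ⟨Finset.mem_insert_of_mem hρP, ?_, ?_, ?_, ?_⟩
      · rw [Finset.sdiff_insert, Finset.card_erase_of_mem hxmem, hcard]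
        omega
      · -- InjOn
        intro a ha b hb hab
        simp only [Finset.coe_insert, Set.mem_insert_iff, Finset.mem_coe] at ha hb
        rcases ha with rfl | ha
        · rcases hb with rfl | hb
          · rfl
          · exfalso
            rw [hf', Function.update_self] at hab
            rw [← hf', hfeq b hb] at hab
            exact hvimg (hab ▸ Finset.mem_image_of_mem f hb)
        · rcases hb with rfl | hb
          · exfalso
            rw [hf', Function.update_self] at hab
            rw [← hf', hfeq a ha] at hab
            exact hvimg (hab ▸ Finset.mem_image_of_mem f ha)
          · rw [hfeq a ha, hfeq b hb] at hab
            exact hinj ha hb hab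
      · rw [hfeq ρ hρP]; exact hρ
      · intro y hy
        rcases Finset.mem_insert.mp hy with rfl | hy
        · rw [hf', Function.update_self, ← hdpar]
          exact hvA
        · rw [hfeq y hy]; exact hmem y hy
      · intro y hy hyρ
        rcases Finset.mem_insert.mp hy with rfl | hy
        · refine ⟨Finset.mem_insert_of_mem hparP, ?_⟩
          rw [hfeq (par y) hparP, hf', Function.update_self]
          exact hvadj
        · obtain ⟨h1, h2⟩ := hadjP y hy hyρ
          refine ⟨Finset.mem_insert_of_mem h1, ?_⟩
          rw [hfeq (par y) h1, hfeq y hy]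
          exact h2
  refine claim (univ \ {ρ}).card {ρ} (fun _ => u) rfl ⟨Finset.mem_singleton_self ρ, ?_, rfl, ?_, ?_⟩
  · intro a ha b hb _
    simp only [Finset.coe_singleton, Set.mem_singleton_iff] at ha hb
    rw [ha, hb]
  · intro y hy
    rw [Finset.mem_singleton.mp hy]
    simpa [SimpleGraph.dist_self] using hu
  · intro y hy hyρ
    exact absurd (Finset.mem_singleton.mp hy) hyρ

set_option maxHeartbeats 4000000 in
/-- Connecting lemma: any rooted tree of depth exactly 3 and maximum degree at most `D`
can be embedded with its root at any given vertex `u`, its third level inside `H`,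
and its levels 1–3 avoiding `W`. -/
theorem stmt12 (D : ℕ) (hD : 2 ≤ D) (γ ν : ℝ)
    (hγ0 : 0 < γ) (hγ : γ < 1 / 4) (hν0 : 0 < ν) (hνγ : ν ≤ γ / 50) :
    ∃ n₀ : ℕ, ∀ (V : Type) [Fintype V], ∀ (G : SimpleGraph V) (n : ℕ),
      Fintype.card V = n → n₀ ≤ n →
      NonExtremal G γ →
      (∀ v : V, (1 / 2 - ν) * n ≤ (degIn G v univ : ℝ)) →
      ∀ (u : V) (H W : Finset V),
        (H.card : ℝ) = 3 * D ^ 3 / γ → W ⊆ univ \ H → (W.card : ℝ) ≤ γ * n / 10 →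
      ∀ (Vt : Type) [Fintype Vt], ∀ (Γ : SimpleGraph Vt) (ρ : Vt),
        Γ.IsTree → (∀ x : Vt, degIn Γ x univ ≤ D) →
        (∃ x : Vt, Γ.dist ρ x = 3) → (∀ x : Vt, Γ.dist ρ x ≤ 3) →
        ∃ f : Vt → V, Function.Injective f ∧
          (∀ x y : Vt, Γ.Adj x y → G.Adj (f x) (f y)) ∧
          f ρ = u ∧
          (∀ x : Vt, Γ.dist ρ x = 3 → f x ∈ H) ∧
          (∀ x : Vt, 1 ≤ Γ.dist ρ x → f x ∉ W) := by
  classical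
  refine ⟨⌈200 * ((D : ℝ) ^ 3 + 1) / γ ^ 2⌉₊, ?_⟩
  intro V _ G n hcardV hn hNE hdeg u H W hH hWH hW Vt _ Γ ρ hT hdegΓ _hx3 hd3
  set N := (n : ℝ) with hNdef
  have hD2 : (2 : ℝ) ≤ (D : ℝ) := by exact_mod_cast hD
  have hD3 : (1 : ℝ) ≤ (D : ℝ) ^ 3 := one_le_pow₀ (by linarith)
  have hγ1 : γ ≤ 1 := le_of_lt (lt_trans hγ (by norm_num))
  have hn₀ : 200 * ((D : ℝ) ^ 3 + 1) / γ ^ 2 ≤ N := by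
    calc 200 * ((D : ℝ) ^ 3 + 1) / γ ^ 2 ≤ (⌈200 * ((D : ℝ) ^ 3 + 1) / γ ^ 2⌉₊ : ℝ) :=
          Nat.le_ceil _
      _ ≤ N := Nat.cast_le.mpr hn
  have hNpos : 0 < N := by
    have : (0 : ℝ) < 200 * ((D : ℝ) ^ 3 + 1) / γ ^ 2 := by positivity
    linarith
  have hHpos : 0 < (H.card : ℝ) := by rw [hH]; positivity
  have hγH : γ * (H.card : ℝ) = 3 * (D : ℝ) ^ 3 := by
    rw [hH]; field_simp
  -- the set S of vertices with many neighbors in H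
  set S := univ.filter (fun v => 2 * D ^ 3 ≤ degIn G v H) with hSdef
  have hSlow : (1 / 2 - ν - 2 * γ / 3) * N ≤ (S.card : ℝ) := by
    have e2 : (H.card : ℝ) * ((1 / 2 - ν) * N) ≤ (eCount G H univ : ℝ) := by
      rw [eCount_eq_sum]
      push_cast
      calc (H.card : ℝ) * ((1 / 2 - ν) * N) = H.card • ((1 / 2 - ν) * N) := by
            rw [nsmul_eq_mul]
        _ ≤ ∑ a ∈ H, (degIn G a univ : ℝ) := Finset.card_nsmul_le_sum _ _ _ (fun a _ => hdeg a)
    have e5 : (eCount G univ H : ℝ) ≤ (S.card : ℝ) * H.card + N * (2 * D ^ 3) := by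
      rw [eCount_eq_sum]
      push_cast
      rw [← Finset.sum_filter_add_sum_filter_not univ (fun v => 2 * D ^ 3 ≤ degIn G v H)]
      have p1 : ∑ v ∈ S, (degIn G v H : ℝ) ≤ (S.card : ℝ) * H.card := by
        calc ∑ v ∈ S, (degIn G v H : ℝ) ≤ S.card • (H.card : ℝ) :=
              Finset.sum_le_card_nsmul _ _ _ (fun v _ => by
                exact_mod_cast degIn_le_card G v H)
          _ = (S.card : ℝ) * H.card := by rw [nsmul_eq_mul]
      have p2 : ∑ v ∈ univ.filter (fun v => ¬ (2 * D ^ 3 ≤ degIn G v H)), (degIn G v H : ℝ)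
          ≤ N * (2 * D ^ 3) := by
        calc ∑ v ∈ univ.filter (fun v => ¬ (2 * D ^ 3 ≤ degIn G v H)), (degIn G v H : ℝ)
            ≤ (univ.filter (fun v => ¬ (2 * D ^ 3 ≤ degIn G v H))).card • ((2 * D ^ 3 : ℕ) : ℝ) :=
              Finset.sum_le_card_nsmul _ _ _ (fun v hv => by
                simp only [Finset.mem_filter, not_le] at hv
                exact_mod_cast le_of_lt hv.2)
          _ ≤ n • ((2 * D ^ 3 : ℕ) : ℝ) := by
              refine nsmul_le_nsmul_left (by positivity) ?_
              calc (univ.filter (fun v => ¬ (2 * D ^ 3 ≤ degIn G v H))).card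
                  ≤ (univ : Finset V).card := Finset.card_le_card (Finset.filter_subset _ _)
                _ = n := by rw [Finset.card_univ, hcardV]
          _ = N * (2 * D ^ 3) := by push_cast [nsmul_eq_mul]; ring
      exact le_trans (add_le_add p1 p2) le_rfl
    have e3 : (eCount G univ H : ℝ) = (eCount G H univ : ℝ) := by
      rw [eCount_comm]
    have key : ((1 / 2 - ν - 2 * γ / 3) * N) * (H.card : ℝ) ≤ (S.card : ℝ) * (H.card : ℝ) := by
      have h2d : N * (2 * (D:ℝ) ^ 3) = (2 * γ / 3) * N * H.card := by
        field_simp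
        nlinarith [hγH]
      nlinarith [e2, e5, e3]
    exact le_of_mul_le_mul_right (by linarith [key]) hHpos
  -- the neighborhood of u
  set Nu := univ.filter (fun w => G.Adj u w) with hNud
  have hNulow : (1 / 2 - ν) * N ≤ (Nu.card : ℝ) := hdeg u
  have hcardu : (univ : Finset V).card = n := by rw [Finset.card_univ, hcardV]
  have hmn : n / 2 ≤ n := Nat.div_le_self _ _
  have hmN : ((n / 2 : ℕ) : ℝ) ≤ N / 2 := by
    exact_mod_cast Nat.cast_div_le
  -- build the padded half-sets
  have hA : ∃ A : Finset V, A.card = n / 2 ∧ ((A \ Nu).card : ℝ) ≤ ν * N := by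
    by_cases hc : n / 2 ≤ Nu.card
    · obtain ⟨A, hAs, hAc⟩ := Finset.exists_subset_card_eq hc
      refine ⟨A, hAc, ?_⟩
      rw [Finset.sdiff_eq_empty_iff_subset.mpr hAs]
      simp only [Finset.card_empty, Nat.cast_zero]
      positivity
    · push_neg at hc
      obtain ⟨A, hsub, -, hAc⟩ := Finset.exists_subsuperset_card_eq (Finset.subset_univ Nu)
        (le_of_lt hc) (by rw [hcardu]; exact hmn)
      refine ⟨A, hAc, ?_⟩
      rw [Finset.card_sdiff_of_subset hsub, hAc]
      rw [Nat.cast_sub (le_of_lt hc)]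
      linarith [hmN, hNulow]
  have hB : ∃ B : Finset V, B.card = n / 2 ∧ ((B \ S).card : ℝ) ≤ (ν + 2 * γ / 3) * N := by
    by_cases hc : n / 2 ≤ S.card
    · obtain ⟨B, hBs, hBc⟩ := Finset.exists_subset_card_eq hc
      refine ⟨B, hBc, ?_⟩
      rw [Finset.sdiff_eq_empty_iff_subset.mpr hBs]
      simp only [Finset.card_empty, Nat.cast_zero]
      have : 0 ≤ 2 * γ / 3 := by positivity
      nlinarith
    · push_neg at hc
      obtain ⟨B, hsub, -, hBc⟩ := Finset.exists_subsuperset_card_eq (Finset.subset_univ S)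
        (le_of_lt hc) (by rw [hcardu]; exact hmn)
      refine ⟨B, hBc, ?_⟩
      rw [Finset.card_sdiff_of_subset hsub, hBc]
      rw [Nat.cast_sub (le_of_lt hc)]
      linarith [hmN, hSlow]
  obtain ⟨A, hAcard, hAdiff⟩ := hA
  obtain ⟨B, hBcard, hBdiff⟩ := hB
  have key := hNE A B (by rw [hcardV]; exact hAcard) (by rw [hcardV]; exact hBcard)
  rw [hcardV] at key
  -- many edges between Nu and S
  have hANle : (A.card : ℝ) ≤ N := by
    exact_mod_cast Nat.cast_le.mpr (le_trans (Finset.card_le_univ A) (le_of_eq hcardu))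
  have hBNle : (B.card : ℝ) ≤ N := by
    exact_mod_cast Nat.cast_le.mpr (le_trans (Finset.card_le_univ B) (le_of_eq hcardu))
  have hNuS : γ / 4 * N ^ 2 ≤ (eCount G Nu S : ℝ) := by
    have split := eCount_split G A B Nu S
    have mono : eCount G (A ∩ Nu) (B ∩ S) ≤ eCount G Nu S :=
      eCount_mono G Finset.inter_subset_right Finset.inter_subset_right
    have splitR : (eCount G A B : ℝ) ≤ (eCount G Nu S : ℝ)
        + ((A \ Nu).card : ℝ) * (B.card : ℝ) + (A.card : ℝ) * ((B \ S).card : ℝ) := by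
      have := le_trans split (by omega : eCount G (A ∩ Nu) (B ∩ S) + (A \ Nu).card * B.card
        + A.card * (B \ S).card ≤ eCount G Nu S + (A \ Nu).card * B.card + A.card * (B \ S).card)
      exact_mod_cast this
    have p1 : ((A \ Nu).card : ℝ) * (B.card : ℝ) ≤ ν * N * N :=
      mul_le_mul hAdiff hBNle (by positivity) (by positivity)
    have p2 : (A.card : ℝ) * ((B \ S).card : ℝ) ≤ N * ((ν + 2 * γ / 3) * N) := by
      refine mul_le_mul hANle hBdiff (by positivity) (by positivity)
    have coeff : 0 ≤ (γ / 3 - 2 * ν - γ / 4) := by linarith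
    nlinarith [mul_nonneg coeff (sq_nonneg N), key, splitR, p1, p2]
  -- the set T of neighbors of u with many neighbors in S
  set T := Nu.filter (fun v => γ * N / 8 ≤ (degIn G v S : ℝ)) with hTd
  have hTlow : γ * N / 8 ≤ (T.card : ℝ) := by
    have e6 : (eCount G Nu S : ℝ) = ∑ v ∈ Nu, (degIn G v S : ℝ) := by
      rw [eCount_eq_sum]; push_cast; rfl
    have e7 : ∑ v ∈ Nu, (degIn G v S : ℝ) ≤ (T.card : ℝ) * N + N * (γ * N / 8) := by
      rw [← Finset.sum_filter_add_sum_filter_not Nu (fun v => γ * N / 8 ≤ (degIn G v S : ℝ))]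
      have q1 : ∑ v ∈ T, (degIn G v S : ℝ) ≤ (T.card : ℝ) * N := by
        calc ∑ v ∈ T, (degIn G v S : ℝ) ≤ T.card • N :=
              Finset.sum_le_card_nsmul _ _ _ (fun v _ => by
                have h1 : degIn G v S ≤ S.card := degIn_le_card G v S
                have h2 : S.card ≤ n := le_trans (Finset.card_le_univ S) (le_of_eq hcardu)
                rw [hNdef]
                exact_mod_cast le_trans h1 h2)
          _ = (T.card : ℝ) * N := by rw [nsmul_eq_mul]
      have q2 : ∑ v ∈ Nu.filter (fun v => ¬ (γ * N / 8 ≤ (degIn G v S : ℝ))), (degIn G v S : ℝ)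
          ≤ N * (γ * N / 8) := by
        calc ∑ v ∈ Nu.filter (fun v => ¬ (γ * N / 8 ≤ (degIn G v S : ℝ))), (degIn G v S : ℝ)
            ≤ (Nu.filter (fun v => ¬ (γ * N / 8 ≤ (degIn G v S : ℝ)))).card • (γ * N / 8) :=
              Finset.sum_le_card_nsmul _ _ _ (fun v hv => by
                simp only [Finset.mem_filter, not_le] at hv
                exact le_of_lt hv.2)
          _ ≤ n • (γ * N / 8) := by
              refine nsmul_le_nsmul_left (by positivity) ?_
              calc (Nu.filter (fun v => ¬ (γ * N / 8 ≤ (degIn G v S : ℝ)))).card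
                  ≤ Nu.card := Finset.card_le_card (Finset.filter_subset _ _)
                _ ≤ n := le_trans (Finset.card_le_univ Nu) (le_of_eq hcardu)
          _ = N * (γ * N / 8) := by rw [nsmul_eq_mul]
      exact add_le_add q1 q2
    have e8 : γ * N / 8 * N ≤ (T.card : ℝ) * N := by nlinarith [hNuS, e6, e7]
    exact le_of_mul_le_mul_right e8 hNpos
  -- the candidate sets at levels 1 and 2
  set A1 := (T \ W) \ H with hA1d
  set A2 := (S \ W) \ H with hA2d
  have sdiff_bound : ∀ (X : Finset V), (X.card : ℝ) - (W.card : ℝ) - (H.card : ℝ)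
      ≤ (((X \ W) \ H).card : ℝ) := by
    intro X
    have h1 : (X.card : ℝ) ≤ ((X \ W).card : ℝ) + (W.card : ℝ) := by
      exact_mod_cast (Finset.card_le_card_sdiff_add_card : X.card ≤ (X \ W).card + W.card)
    have h2 : ((X \ W).card : ℝ) ≤ (((X \ W) \ H).card : ℝ) + (H.card : ℝ) := by
      exact_mod_cast (Finset.card_le_card_sdiff_add_card : (X \ W).card ≤ ((X \ W) \ H).card + H.card)
    linarith
  have hmargin : (H.card : ℝ) + 2 * (D : ℝ) ^ 3 ≤ γ * N / 40 := by
    have h1 : γ * N ≥ 200 * ((D : ℝ) ^ 3 + 1) / γ := by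
      have := mul_le_mul_of_nonneg_left hn₀ (le_of_lt hγ0)
      calc γ * N ≥ γ * (200 * ((D : ℝ) ^ 3 + 1) / γ ^ 2) := this
        _ = 200 * ((D : ℝ) ^ 3 + 1) / γ := by field_simp
    have h2 : (H.card : ℝ) = 3 * (D : ℝ) ^ 3 / γ := by exact_mod_cast hH
    have h3 : 2 * (D : ℝ) ^ 3 ≤ 2 * (D : ℝ) ^ 3 / γ := by
      rw [le_div_iff₀ hγ0]
      nlinarith
    have h4 : 3 * (D : ℝ) ^ 3 / γ + 2 * (D : ℝ) ^ 3 / γ ≤ 5 * ((D : ℝ) ^ 3 + 1) / γ := by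
      rw [← add_div, div_le_div_iff₀ hγ0 hγ0]
      nlinarith
    have h5 : 200 * ((D : ℝ) ^ 3 + 1) / γ / 40 = 5 * ((D : ℝ) ^ 3 + 1) / γ := by ring
    linarith [h1, h2, h3, h4]
  -- the bound on the number of vertices of the tree
  have hcΓ := hT.isConnected
  have hpar_ex : ∀ x : Vt, Γ.dist ρ x ≠ 0 →
      ∃ p, Γ.Adj p x ∧ Γ.dist ρ p + 1 = Γ.dist ρ x := fun x hx => parent_exists hcΓ hx
  have hVt : Fintype.card Vt ≤ 2 * D ^ 3 := card_le_of_depth_three hT D hD hdegΓ hpar_ex hd3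
  have hVtR : (Fintype.card Vt : ℝ) ≤ 2 * (D : ℝ) ^ 3 := by exact_mod_cast hVt
  -- the parent function
  set par : Vt → Vt := fun x => if h : Γ.dist ρ x ≠ 0 then (hpar_ex x h).choose else ρ with hpard
  have hparP : ∀ x, x ≠ ρ → Γ.Adj (par x) x ∧ Γ.dist ρ (par x) + 1 = Γ.dist ρ x := by
    intro x hx
    have h0 : Γ.dist ρ x ≠ 0 := fun h => hx ((hcΓ.dist_eq_zero_iff).mp h).symm
    simp only [hpard, dif_pos h0]
    exact (hpar_ex x h0).choose_spec
  -- the level sets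
  set AL : ℕ → Finset V := fun i => if i = 0 then {u} else if i = 1 then A1 else
    if i = 2 then A2 else H with hALd
  have hbig : ∀ i, i < 3 → ∀ v ∈ AL i, Fintype.card Vt ≤ ((AL (i+1)).filter (G.Adj v)).card := by
    intro i hi v hv
    interval_cases i
    · -- level 0 → 1
      simp only [hALd] at hv ⊢
      norm_num at hv ⊢
      subst hv
      have hfeq : A1.filter (G.Adj v) = A1 := by
        refine Finset.filter_true_of_mem ?_
        intro w hw
        have hwT : w ∈ T := (Finset.mem_sdiff.mp ((Finset.mem_sdiff.mp hw).1)).1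
        have hwNu : w ∈ Nu := Finset.mem_filter.mp hwT |>.1
        exact (Finset.mem_filter.mp hwNu).2
      rw [hfeq]
      have hA1low : γ * N / 40 - (H.card : ℝ) ≤ (A1.card : ℝ) := by
        have := sdiff_bound T
        rw [← hA1d] at this
        linarith [hTlow, hW, this]
      have : (Fintype.card Vt : ℝ) ≤ (A1.card : ℝ) := by linarith [hVtR, hmargin, hA1low]
      exact_mod_cast this
    · -- level 1 → 2
      simp only [hALd] at hv ⊢
      norm_num at hv ⊢
      have hvT : v ∈ T := (Finset.mem_sdiff.mp ((Finset.mem_sdiff.mp hv).1)).1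
      have hvdeg : γ * N / 8 ≤ (degIn G v S : ℝ) := (Finset.mem_filter.mp hvT).2
      set X := S.filter (fun w => G.Adj v w) with hXd
      have hsub : (X \ W) \ H ⊆ A2.filter (G.Adj v) := by
        intro w hw
        rw [Finset.mem_sdiff] at hw
        obtain ⟨hw1, hwH⟩ := hw
        rw [Finset.mem_sdiff] at hw1
        obtain ⟨hwX, hwW⟩ := hw1
        rw [Finset.mem_filter] at hwX ⊢
        refine ⟨?_, hwX.2⟩
        rw [hA2d, Finset.mem_sdiff]
        exact ⟨Finset.mem_sdiff.mpr ⟨hwX.1, hwW⟩, hwH⟩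
      have hcard2 : (X.card : ℝ) - (W.card : ℝ) - (H.card : ℝ)
          ≤ ((A2.filter (G.Adj v)).card : ℝ) := by
        have := sdiff_bound X
        have hmono : (((X \ W) \ H).card : ℝ) ≤ ((A2.filter (G.Adj v)).card : ℝ) := by
          exact_mod_cast Finset.card_le_card hsub
        linarith
      have hXdeg : (X.card : ℝ) = (degIn G v S : ℝ) := rfl
      have : (Fintype.card Vt : ℝ) ≤ ((A2.filter (G.Adj v)).card : ℝ) := by
        have h18 : γ * N / 8 - γ * N / 10 = γ * N / 40 := by ring
        linarith [hVtR, hmargin, hcard2, hvdeg, hW]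
      exact_mod_cast this
    · -- level 2 → 3
      simp only [hALd] at hv ⊢
      norm_num at hv ⊢
      have hvS : v ∈ S := (Finset.mem_sdiff.mp ((Finset.mem_sdiff.mp hv).1)).1
      have hvdeg : 2 * D ^ 3 ≤ degIn G v H := (Finset.mem_filter.mp hvS).2
      calc Fintype.card Vt ≤ 2 * D ^ 3 := hVt
        _ ≤ degIn G v H := hvdeg
        _ = (H.filter (G.Adj v)).card := rfl
  -- the greedy embedding
  obtain ⟨f, hfinj, hfρ, hfmem, hfadj⟩ := greedy_embed G Γ ρ par hparP hd3 AL u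
    (by simp [hALd]) hbig
  have homf : ∀ x y : Vt, Γ.Adj x y → G.Adj (f x) (f y) := by
    intro x y hxy
    have hne : Γ.dist ρ x ≠ Γ.dist ρ y := adj_dist_ne hT hxy
    have t1 : Γ.dist ρ y ≤ Γ.dist ρ x + 1 := by
      have h1 := hcΓ.dist_triangle (u := ρ) (v := x) (w := y)
      have h2 : Γ.dist x y ≤ 1 := SimpleGraph.dist_le hxy.toWalk
      omega
    have t2 : Γ.dist ρ x ≤ Γ.dist ρ y + 1 := by
      have h1 := hcΓ.dist_triangle (u := ρ) (v := y) (w := x)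
      have h2 : Γ.dist y x ≤ 1 := SimpleGraph.dist_le hxy.symm.toWalk
      omega
    by_cases hcase : Γ.dist ρ y = Γ.dist ρ x + 1
    · have hyρ : y ≠ ρ := by
        intro h; subst h
        simp [SimpleGraph.dist_self] at hcase
      obtain ⟨hpa, hpd⟩ := hparP y hyρ
      have hpx : par y = x := parent_unique (ρ := ρ) hT hpa hxy (by omega) (by omega)
      have := hfadj y hyρ
      rwa [hpx] at this
    · have hcase' : Γ.dist ρ x = Γ.dist ρ y + 1 := by omega
      have hxρ : x ≠ ρ := by
        intro h; subst h
        simp [SimpleGraph.dist_self] at hcase'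
      obtain ⟨hpa, hpd⟩ := hparP x hxρ
      have hpy : par x = y := parent_unique (ρ := ρ) hT hpa hxy.symm (by omega) (by omega)
      have := hfadj x hxρ
      rw [hpy] at this
      exact this.symm
  refine ⟨f, hfinj, homf, hfρ, ?_, ?_⟩
  · intro x hx
    have := hfmem x
    rw [hx] at this
    simpa [hALd] using this
  · intro x hx hWx
    have hmx := hfmem x
    have hd := hd3 x
    interval_cases h : Γ.dist ρ x
    · simp only [hALd] at hmx
      norm_num at hmx
      exact (Finset.mem_sdiff.mp ((Finset.mem_sdiff.mp hmx).1)).2 hWx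
    · simp only [hALd] at hmx
      norm_num at hmx
      exact (Finset.mem_sdiff.mp ((Finset.mem_sdiff.mp hmx).1)).2 hWx
    · simp only [hALd] at hmx
      norm_num at hmx
      exact (Finset.mem_sdiff.mp (hWH hWx)).2 hmx
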